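/- Let Γ = HNN(H, Σ, θ), let ε, ε′ ∈ {−1, 1}, g′ ∈ H t^{ε} and h′ ∈ t^{ε′} H, and let g, h ∈ Γ with reduced expressions g = x₀ t^{ε₁} ⋯ t^{εₙ} xₙ and h = y₀ t^{η₁} ⋯ t^{ηₘ} yₘ of lengths n, m ≥ K+1, where K ≥ 2, g′ = x₀ t^{ε₁} is the first letter of g and h′ = t^{ηₘ} yₘ is the last letter of h. Define g_i = x_{n−i} t^{ε_{n−i+1}} ⋯ t^{εₙ} xₙ, h_j = y₀ t^{η₁} y₁ ⋯ t^{η_j} y_j (with g₀ = h₀ = e), and W = ⋃_{i+j ≤ K} g g_i⁻¹ Σ_{ε_{n−i}} h_j⁻¹ h. Then for every r ∈ Γ with |r| ≤ K: if the element g r h admits no reduced expression beginning with g′ and ending with h′ (i.e. beginning with g′σ for some σ ∈ Σ_ε and ending with σ′h′ for some σ′ ∈ Σ_{−ε′}), then g r h ∈ W. -/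

import Mathlib

open HNNExtension NormalWord

/-- `prefixProd φ w k` is the element `x₀ t^{ε₁} x₁ ⋯ t^{ε_k} x_k` of the HNN
extension: the product of the head of the word `w` with its first `k` `t`-letters.
In particular `prefixProd φ w 0 = of w.head` and `prefixProd φ w w.toList.length`
is `w.prod φ`. -/
def prefixProd {G : Type*} [Group G] {A B : Subgroup G} (φ : A ≃* B)
    (w : HNNExtension.NormalWord.ReducedWord G A B) (k : ℕ) : HNNExtension G A B φ :=
  of w.head * ((w.toList.take k).map (fun x => t ^ (x.1 : ℤ) * of x.2)).prod

namespace FVHelp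

open HNNExtension List

variable {G : Type*} [Group G] {A B : Subgroup G} (φ : A ≃* B)

/-- product of a list of letters -/
def lp (L : List (ℤˣ × G)) : HNNExtension G A B φ :=
  (L.map (fun x => t ^ (x.1 : ℤ) * of x.2)).prod

/-- the reducedness relation -/
abbrev RW (A B : Subgroup G) : (ℤˣ × G) → (ℤˣ × G) → Prop :=
  fun a b => a.2 ∈ toSubgroup A B a.1 → a.1 = b.1

@[simp] lemma lp_nil : lp φ ([] : List (ℤˣ × G)) = 1 := rfl

lemma lp_append (X Y : List (ℤˣ × G)) : lp φ (X ++ Y) = lp φ X * lp φ Y := by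
  simp [lp]

lemma lp_cons (p : ℤˣ × G) (X : List (ℤˣ × G)) :
    lp φ (p :: X) = (t ^ (p.1 : ℤ) * of p.2) * lp φ X := by
  simp [lp]

lemma lp_concat (X : List (ℤˣ × G)) (u : ℤˣ) (x : G) :
    lp φ (X ++ [(u, x)]) = lp φ X * (t ^ (u : ℤ) * of x) := by
  simp [lp]

lemma pinchE (u : ℤˣ) (σ : G) (hσ : σ ∈ toSubgroup A B u) :
    ∃ σ' : G, (t ^ (u : ℤ) : HNNExtension G A B φ) * of σ * t ^ ((((-u) : ℤˣ)) : ℤ) = of σ' := by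
  rcases Int.units_eq_one_or u with rfl | rfl
  · refine ⟨(φ ⟨σ, hσ⟩ : B), ?_⟩
    have h := t_mul_of (φ := φ) ⟨σ, hσ⟩
    simp only [Units.val_one, zpow_one, Units.val_neg, zpow_neg] at *
    rw [h]; group
  · refine ⟨(φ.symm ⟨σ, hσ⟩ : A), ?_⟩
    have h := inv_t_mul_of (φ := φ) ⟨σ, hσ⟩
    simp only [Units.val_neg, Units.val_one, zpow_neg, zpow_one, neg_neg] at *
    rw [h]; group

lemma units_eq_of_ne_neg {u v : ℤˣ} (h : v ≠ -u) : u = v := by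
  rcases Int.units_eq_one_or u with rfl | rfl <;>
    rcases Int.units_eq_one_or v with rfl | rfl <;> simp_all

lemma chain'_modifyLast {X : List (ℤˣ × G)} {u : ℤˣ} {x y : G}
    (h : Chain' (RW A B) (X ++ [(u, x)])) : Chain' (RW A B) (X ++ [(u, y)]) := by
  simp only [Chain'] at h ⊢
  rw [isChain_append] at h ⊢
  refine ⟨h.1, isChain_singleton _, ?_⟩
  intro p hp q hq
  simp only [head?_cons, Option.mem_some_iff] at hq
  subst hq
  exact fun hm => h.2.2 p hp (u, x) (by simp) hm

/-- the `g`-prefix of length `k ≥ 1` whose last `G`-letter is multiplied by `a` -/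
def Pword (Lg : List (ℤˣ × G)) (k : ℕ) (a : G) : List (ℤˣ × G) :=
  Lg.take (k - 1) ++ [((Lg.getD (k - 1) (1, 1)).1, (Lg.getD (k - 1) (1, 1)).2 * a)]

lemma take_eq_pword {Lg : List (ℤˣ × G)} {k : ℕ} (h1 : 1 ≤ k) (hk : k ≤ Lg.length) :
    Lg.take k = Lg.take (k - 1) ++ [Lg.getD (k - 1) (1, 1)] := by
  have hlt : k - 1 < Lg.length := by omega
  have h := List.take_concat_get hlt
  rw [List.concat_eq_append] at h
  rw [List.getD_eq_getElem _ _ hlt]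
  conv_lhs => rw [show k = (k - 1) + 1 by omega]
  exact h.symm

lemma lp_pword {Lg : List (ℤˣ × G)} {k : ℕ} (h1 : 1 ≤ k) (hk : k ≤ Lg.length) (a : G) :
    lp φ (Pword Lg k a) = lp φ (Lg.take k) * of a := by
  rw [take_eq_pword h1 hk, Pword, lp_concat, lp_concat, map_mul]
  group

lemma chain'_pword {Lg : List (ℤˣ × G)} (hLg : Chain' (RW A B) Lg) {k : ℕ}
    (h1 : 1 ≤ k) (hk : k ≤ Lg.length) (a : G) :
    Chain' (RW A B) (Pword Lg k a) := by
  have h := hLg.take k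
  rw [take_eq_pword h1 hk] at h
  rw [Pword]
  exact chain'_modifyLast (x := (Lg.getD (k - 1) (1, 1)).2) (by simpa [Chain'] using h)

lemma pword_ne_nil (Lg : List (ℤˣ × G)) (k : ℕ) (a : G) : Pword Lg k a ≠ [] := by
  simp [Pword]

lemma pword_head_fst {Lg : List (ℤˣ × G)} (hLg : Lg ≠ []) {k : ℕ}
    (h1 : 1 ≤ k) (hk : k ≤ Lg.length) (a : G) (Z : List (ℤˣ × G)) (hne : Pword Lg k a ++ Z ≠ []) :
    ((Pword Lg k a ++ Z).head hne).1 = (Lg.head hLg).1 := by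
  rcases Nat.eq_or_lt_of_le h1 with h | h
  · have hk1 : k = 1 := h.symm
    subst hk1
    have hg : Lg.getD 0 (1, 1) = Lg.head hLg := by
      rw [List.getD_eq_getElem _ _ (List.length_pos_iff.mpr hLg)]
      exact List.getElem_zero _
    have hh : ((Pword Lg 1 a ++ Z).head hne)
        = ((Lg.getD 0 (1, 1)).1, (Lg.getD 0 (1, 1)).2 * a) := rfl
    rw [hh, hg]
  · have ht : Lg.take (k - 1) ≠ [] := by
      have : 0 < (Lg.take (k - 1)).length := by
        rw [List.length_take]; omega
      exact List.ne_nil_of_length_pos this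
    simp only [Pword, List.append_assoc]
    rw [List.head_append_left ht, List.head_take]

lemma chain'_drop {R : (ℤˣ × G) → (ℤˣ × G) → Prop} {L : List (ℤˣ × G)} (h : Chain' R L) (j : ℕ) :
    Chain' R (L.drop j) := by
  have := (List.isChain_append (R := R) (l₁ := L.take j) (l₂ := L.drop j)).mp (by rwa [take_append_drop])
  exact this.2.1

lemma prefixProd_zero (w : HNNExtension.NormalWord.ReducedWord G A B) :
    prefixProd φ w 0 = of w.head := by
  simp [prefixProd]

lemma prefixProd_eq (w : HNNExtension.NormalWord.ReducedWord G A B) (k : ℕ) :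
    prefixProd φ w k = of w.head * lp φ (w.toList.take k) := rfl

lemma prod_eq_lp (w : HNNExtension.NormalWord.ReducedWord G A B) :
    w.prod φ = of w.head * lp φ w.toList := rfl

lemma prefixProd_succ (w : HNNExtension.NormalWord.ReducedWord G A B) {j : ℕ}
    (hj : j < w.toList.length) :
    prefixProd φ w (j + 1) = prefixProd φ w j *
      (t ^ ((w.toList.get ⟨j, hj⟩).1 : ℤ) * of (w.toList.get ⟨j, hj⟩).2) := by
  rw [prefixProd_eq, prefixProd_eq, show w.toList.take (j+1)
      = w.toList.take j ++ [w.toList.get ⟨j, hj⟩] by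
    rw [← List.concat_eq_append, List.get_eq_getElem, List.take_concat_get]]
  rw [lp_append]
  simp [lp, mul_assoc]

lemma pinchE' (u : ℤˣ) (σ : G) (hσ : σ ∈ toSubgroup A B u) :
    ∃ σ' : G, ∀ d : HNNExtension G A B φ,
      t ^ (u : ℤ) * of σ * (t ^ ((((-u) : ℤˣ)) : ℤ) * d) = of σ' * d := by
  obtain ⟨σ', h⟩ := pinchE φ u σ hσ
  exact ⟨σ', fun d => by rw [← mul_assoc, h]⟩

lemma phase1 (Lg : List (ℤˣ × G)) (hLg : List.Chain' (RW A B) Lg) :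
    ∀ (ts : List (ℤˣ × G)) (k : ℕ) (a : G) (U : List (ℤˣ × G)),
    1 ≤ k → k ≤ Lg.length → U.length + ts.length < k →
    List.Chain' (RW A B) (Pword Lg k a ++ U) →
    ∃ (k' : ℕ) (a' : G) (U' : List (ℤˣ × G)),
      1 ≤ k' ∧ k' ≤ k ∧
      (Lg.length - k') + U'.length ≤ (Lg.length - k) + U.length + ts.length ∧
      U'.length < k' ∧
      List.Chain' (RW A B) (Pword Lg k' a' ++ U') ∧
      lp φ (Pword Lg k' a' ++ U') = lp φ (Pword Lg k a ++ U) * lp φ ts := by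
  intro ts
  induction ts with
  | nil =>
    intro k a U h1 hk hb hch
    exact ⟨k, a, U, h1, le_refl _, by simp, by simpa using hb, hch, by simp⟩
  | cons p ts ih =>
    obtain ⟨ζ, z⟩ := p
    intro k a U h1 hk hb hch
    simp only [List.length_cons] at hb
    rcases U.eq_nil_or_concat with rfl | ⟨V, q, hU⟩
    · -- U = []
      simp only [List.length_nil] at hb
      by_cases hp : (Lg.getD (k-1) (1,1)).2 * a ∈ toSubgroup A B (Lg.getD (k-1) (1,1)).1 ∧
          ζ = -(Lg.getD (k-1) (1,1)).1
      · -- pinch into the g-prefix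
        have hk2 : 2 ≤ k := by omega
        obtain ⟨σ', hσ'⟩ := pinchE' φ _ _ hp.1
        have h1' : 1 ≤ k - 1 := by omega
        have hk' : k - 1 ≤ Lg.length := by omega
        have hch' : List.Chain' (RW A B) (Pword Lg (k-1) (σ' * z) ++ []) := by
          simpa using chain'_pword hLg h1' hk' (σ' * z)
        have hstep : lp φ (Pword Lg (k-1) (σ' * z) ++ [])
            = lp φ (Pword Lg k a ++ []) * (t ^ (ζ : ℤ) * of z) := by
          rw [List.append_nil, List.append_nil, lp_pword φ h1' hk', lp_pword φ h1 hk,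
            take_eq_pword h1 hk, lp_concat, hp.2, map_mul, ← hσ' (of z), map_mul]
          simp [mul_assoc]
        obtain ⟨k', a', U', H1, H2, H3, H4, H5, H6⟩ :=
          ih (k-1) (σ' * z) [] h1' hk' (by simp; omega) hch'
        refine ⟨k', a', U', H1, by omega, ?_, H4, H5, ?_⟩
        · simp only [List.length_nil, List.length_cons, List.length_append] at H3 ⊢; omega
        · rw [H6, hstep, lp_cons, mul_assoc]
      · -- no pinch : append the letter
        have hch' : List.Chain' (RW A B) (Pword Lg k a ++ [(ζ, z)]) := by
          simp only [Chain']
          rw [List.isChain_append]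
          refine ⟨by simpa [Chain'] using hch, List.isChain_singleton _, ?_⟩
          intro x hx y hy
          rw [show Pword Lg k a = Lg.take (k-1) ++
              [((Lg.getD (k-1) (1,1)).1, (Lg.getD (k-1) (1,1)).2 * a)] from rfl,
            List.getLast?_concat] at hx
          simp only [Option.mem_some_iff] at hx
          simp only [List.head?_cons, Option.mem_some_iff] at hy
          subst hx; subst hy
          intro hm
          exact units_eq_of_ne_neg (fun hc => hp ⟨hm, hc⟩)
        have hstep : lp φ (Pword Lg k a ++ [(ζ, z)])
            = lp φ (Pword Lg k a ++ []) * (t ^ (ζ : ℤ) * of z) := by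
          rw [List.append_nil, lp_concat]
        obtain ⟨k', a', U', H1, H2, H3, H4, H5, H6⟩ :=
          ih k a [(ζ, z)] h1 hk (by simp; omega) hch'
        refine ⟨k', a', U', H1, H2, ?_, H4, H5, ?_⟩
        · simp only [List.length_nil, List.length_cons, List.length_append] at H3 ⊢; omega
        · rw [H6, hstep, lp_cons, mul_assoc]
    · -- U = V ++ [q]
      rw [List.concat_eq_append] at hU
      subst hU
      obtain ⟨ζ₀, z₀⟩ := q
      simp only [List.length_append, List.length_cons, List.length_nil] at hb
      by_cases hp : z₀ ∈ toSubgroup A B ζ₀ ∧ ζ = -ζ₀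
      · obtain ⟨σ', hσ'⟩ := pinchE' φ ζ₀ z₀ hp.1
        have hσ2 : ∀ d : HNNExtension G A B φ,
            t ^ ((ζ₀ : ℤˣ) : ℤ) * (of z₀ * (t ^ ((((-ζ₀) : ℤˣ)) : ℤ) * d)) = of σ' * d :=
          fun d => by rw [← mul_assoc]; exact hσ' d
        rcases V.eq_nil_or_concat with rfl | ⟨V₀, q₁, hV⟩
        · -- merge into the g-prefix's last letter
          have hch' : List.Chain' (RW A B) (Pword Lg k (a * (σ' * z)) ++ []) := by
            simpa using chain'_pword hLg h1 hk (a * (σ' * z))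
          have hstep : lp φ (Pword Lg k (a * (σ' * z)) ++ [])
              = lp φ (Pword Lg k a ++ ([] ++ [(ζ₀, z₀)])) * (t ^ (ζ : ℤ) * of z) := by
            rw [List.append_nil, List.nil_append, lp_concat, hp.2,
              lp_pword φ h1 hk, lp_pword φ h1 hk]
            simp only [map_mul, mul_assoc]
            rw [hσ2 (of z)]
          obtain ⟨k', a', U', H1, H2, H3, H4, H5, H6⟩ :=
            ih k (a * (σ' * z)) [] h1 hk (by simp; omega) hch'
          refine ⟨k', a', U', H1, H2, ?_, H4, H5, ?_⟩
          · simp only [List.length_nil, List.length_append, List.length_cons] at H3 ⊢; omega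
          · rw [H6, hstep, lp_cons, mul_assoc]
        · -- merge into the last letter of U
          rw [List.concat_eq_append] at hV
          subst hV
          obtain ⟨u₁, x₁⟩ := q₁
          have hch' : List.Chain' (RW A B)
              (Pword Lg k a ++ (V₀ ++ [(u₁, x₁ * (σ' * z))])) := by
            have h2 : List.Chain' (RW A B)
                ((Pword Lg k a ++ V₀ ++ [(u₁, x₁)]) ++ [(ζ₀, z₀)]) := by
              simpa [List.append_assoc] using hch
            have h3 := (List.isChain_append.mp h2).1
            have h4 := chain'_modifyLast (y := x₁ * (σ' * z)) h3
            simpa [List.append_assoc] using h4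
          have hstep : lp φ (Pword Lg k a ++ (V₀ ++ [(u₁, x₁ * (σ' * z))]))
              = lp φ (Pword Lg k a ++ (V₀ ++ [(u₁, x₁)] ++ [(ζ₀, z₀)]))
                * (t ^ (ζ : ℤ) * of z) := by
            rw [hp.2]
            simp only [← List.append_assoc]
            rw [lp_concat, lp_concat, lp_concat]
            simp only [map_mul, mul_assoc]
            rw [hσ2 (of z)]
          obtain ⟨k', a', U', H1, H2, H3, H4, H5, H6⟩ :=
            ih k a (V₀ ++ [(u₁, x₁ * (σ' * z))]) h1 hk (by simp at hb ⊢; omega) hch'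
          refine ⟨k', a', U', H1, H2, ?_, H4, H5, ?_⟩
          · simp only [List.length_nil, List.length_cons, List.length_append] at H3 ⊢; omega
          · rw [H6, hstep, lp_cons, mul_assoc]
      · -- no pinch : append the letter
        have hch' : List.Chain' (RW A B)
            (Pword Lg k a ++ ((V ++ [(ζ₀, z₀)]) ++ [(ζ, z)])) := by
          rw [show Pword Lg k a ++ ((V ++ [(ζ₀, z₀)]) ++ [(ζ, z)])
              = (Pword Lg k a ++ (V ++ [(ζ₀, z₀)])) ++ [(ζ, z)] from by
            simp [List.append_assoc]]
          simp only [Chain']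
          rw [List.isChain_append]
          refine ⟨hch, List.isChain_singleton _, ?_⟩
          intro x hx y hy
          rw [show Pword Lg k a ++ (V ++ [(ζ₀, z₀)])
              = (Pword Lg k a ++ V) ++ [(ζ₀, z₀)] from by simp [List.append_assoc],
            List.getLast?_concat] at hx
          simp only [Option.mem_some_iff] at hx
          simp only [List.head?_cons, Option.mem_some_iff] at hy
          subst hx; subst hy
          intro hm
          exact units_eq_of_ne_neg (fun hc => hp ⟨hm, hc⟩)
        have hstep : lp φ (Pword Lg k a ++ ((V ++ [(ζ₀, z₀)]) ++ [(ζ, z)]))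
            = lp φ (Pword Lg k a ++ (V ++ [(ζ₀, z₀)])) * (t ^ (ζ : ℤ) * of z) := by
          simp only [← List.append_assoc]
          rw [lp_concat]
        obtain ⟨k', a', U', H1, H2, H3, H4, H5, H6⟩ :=
          ih k a ((V ++ [(ζ₀, z₀)]) ++ [(ζ, z)]) h1 hk (by simp; omega) hch'
        refine ⟨k', a', U', H1, H2, ?_, H4, H5, ?_⟩
        · simp only [List.length_nil, List.length_cons, List.length_append] at H3 ⊢; omega
        · rw [H6, hstep, lp_cons, mul_assoc]

end FVHelp

open FVHelp

/-- **Combinatorial lemma on HNN extensions** (Lemma 4.4 of Fima–Vaes, element case).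
Let `Γ = HNN(H, Σ, θ)` (Mathlib: `HNNExtension G A B φ`), let `K ≥ 2` and let `g, h`
have reduced expressions `wg = x₀ t^{ε₁} ⋯ t^{εₙ} xₙ` and `wh = y₀ t^{η₁} ⋯ t^{ηₘ} yₘ`
of lengths `n, m ≥ K + 1`, with first letter `g′ = x₀ t^{ε₁}` of `g` and last letter
`h′ = t^{ηₘ} yₘ` of `h`.  With `gᵢ = x_{n−i} t^{ε_{n−i+1}} ⋯ t^{εₙ} xₙ`,
`h_j = y₀ t^{η₁} ⋯ t^{η_j} y_j` (so `g gᵢ⁻¹ = prefixProd wg (n−i) · x_{n−i}⁻¹` and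
`h_j = prefixProd wh j`), set `W = ⋃_{i+j≤K} g gᵢ⁻¹ Σ_{ε_{n−i}} h_j⁻¹ h`.  Then for
every `r ∈ Γ` of length `|r| ≤ K`: if `g r h` admits no reduced expression beginning
with `g′` and ending with `h′` (i.e. beginning with `g′σ`, `σ ∈ Σ_ε` — equivalently
first exponent `ε₁` and head in `x₀ · Σ_{−ε₁}` — and ending with `σ′h′`,
`σ′ ∈ Σ_{−ε′}` — equivalently last exponent `ηₘ` and last group letter in
`Σ_{ηₘ} · yₘ`), then `g r h ∈ W`. -/
theorem mem_W_of_not_begins_ends {G : Type*} [Group G] (A B : Subgroup G) (φ : A ≃* B)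
    (K : ℕ) (hK : 2 ≤ K)
    (wg wh : HNNExtension.NormalWord.ReducedWord G A B)
    (hgne : wg.toList ≠ []) (hhne : wh.toList ≠ [])
    (hn : K + 1 ≤ wg.toList.length) (hm : K + 1 ≤ wh.toList.length)
    (r : HNNExtension G A B φ)
    (hr : ∃ wr : HNNExtension.NormalWord.ReducedWord G A B,
      wr.prod φ = r ∧ wr.toList.length ≤ K)
    (hno : ¬ ∃ (w : HNNExtension.NormalWord.ReducedWord G A B) (hne : w.toList ≠ []),
      w.prod φ = wg.prod φ * r * wh.prod φ ∧
      (w.toList.head hne).1 = (wg.toList.head hgne).1 ∧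
      wg.head⁻¹ * w.head ∈ HNNExtension.toSubgroup A B (-(wg.toList.head hgne).1) ∧
      (w.toList.getLast hne).1 = (wh.toList.getLast hhne).1 ∧
      (w.toList.getLast hne).2 * ((wh.toList.getLast hhne).2)⁻¹ ∈
        HNNExtension.toSubgroup A B ((wh.toList.getLast hhne).1)) :
    ∃ i j : ℕ, i + j ≤ K ∧
      ∃ (hi : wg.toList.length - i - 1 < wg.toList.length) (σ : G),
        σ ∈ HNNExtension.toSubgroup A B (wg.toList.get ⟨wg.toList.length - i - 1, hi⟩).1 ∧
        wg.prod φ * r * wh.prod φ =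
          prefixProd φ wg (wg.toList.length - i) *
            (of (wg.toList.get ⟨wg.toList.length - i - 1, hi⟩).2)⁻¹ *
            of σ * (prefixProd φ wh j)⁻¹ * wh.prod φ := by
  classical
  obtain ⟨wr, hwr, hwrlen⟩ := hr
  have hgchain : List.Chain' (RW A B) wg.toList := wg.chain
  have hn1 : 1 ≤ wg.toList.length := by omega
  -- clean exit: a reduced word for g r h beginning like g and ending like h
  have cleanExit : ∀ (k : ℕ) (a : G) (U : List (ℤˣ × G)) (j : ℕ),
      1 ≤ k → k ≤ wg.toList.length → j < wh.toList.length →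
      List.Chain' (RW A B) (Pword wg.toList k a ++ (U ++ wh.toList.drop j)) →
      of wg.head * lp φ (Pword wg.toList k a ++ U) = wg.prod φ * r * prefixProd φ wh j →
      False := by
    intro k a U j h1 hk hj hch hval
    have hdne : wh.toList.drop j ≠ [] :=
      List.ne_nil_of_length_pos (by rw [List.length_drop]; omega)
    have hPne : Pword wg.toList k a ++ (U ++ wh.toList.drop j) ≠ [] := by simp [Pword]
    have e1 : (Pword wg.toList k a ++ (U ++ wh.toList.drop j)).getLast hPne
        = wh.toList.getLast hhne := by
      have h3 : (Pword wg.toList k a ++ (U ++ wh.toList.drop j)).getLast?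
          = (wh.toList.drop j).getLast? := by
        rw [List.getLast?_append, List.getLast?_append,
          List.getLast?_eq_getLast hdne]
        rfl
      have h4 : (wh.toList.drop j).getLast? = wh.toList.getLast? := by
        conv_rhs => rw [← List.take_append_drop j wh.toList]
        rw [List.getLast?_append, List.getLast?_eq_getLast hdne]
        rfl
      rw [List.getLast?_eq_getLast hPne, h4, List.getLast?_eq_getLast hhne] at h3
      exact Option.some.inj h3
    apply hno
    refine ⟨⟨wg.head, Pword wg.toList k a ++ (U ++ wh.toList.drop j), hch⟩, hPne,
      ?_, ?_, ?_, ?_, ?_⟩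
    · show of wg.head * lp φ (Pword wg.toList k a ++ (U ++ wh.toList.drop j)) = _
      rw [← List.append_assoc, lp_append, ← mul_assoc, hval]
      have h2 : wh.prod φ = prefixProd φ wh j * lp φ (wh.toList.drop j) := by
        rw [prod_eq_lp, prefixProd_eq, mul_assoc, ← lp_append, List.take_append_drop]
      rw [h2]
      simp [mul_assoc]
    · exact pword_head_fst hgne h1 hk a _ hPne
    · simpa using one_mem _
    · rw [show (_ : List (ℤˣ × G)).getLast hPne = wh.toList.getLast hhne from e1]
    · rw [show (_ : List (ℤˣ × G)).getLast hPne = wh.toList.getLast hhne from e1]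
      simpa using one_mem _
  -- phase 2 : multiply in the word wh letter by letter
  have key : ∀ (c : ℕ) (U : List (ℤˣ × G)) (k : ℕ) (a : G) (j : ℕ),
      U.length ≤ c → 1 ≤ k → k ≤ wg.toList.length →
      (wg.toList.length - k) + U.length + j ≤ K →
      List.Chain' (RW A B) (Pword wg.toList k a ++ U) →
      of wg.head * lp φ (Pword wg.toList k a ++ U) = wg.prod φ * r * prefixProd φ wh j →
      ∃ i j : ℕ, i + j ≤ K ∧
      ∃ (hi : wg.toList.length - i - 1 < wg.toList.length) (σ : G),
        σ ∈ HNNExtension.toSubgroup A B (wg.toList.get ⟨wg.toList.length - i - 1, hi⟩).1 ∧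
        wg.prod φ * r * wh.prod φ =
          prefixProd φ wg (wg.toList.length - i) *
            (of (wg.toList.get ⟨wg.toList.length - i - 1, hi⟩).2)⁻¹ *
            of σ * (prefixProd φ wh j)⁻¹ * wh.prod φ := by
    intro c
    induction c using Nat.strong_induction_on with
    | _ c ih =>
    intro U k a j hUc h1 hk hbud hch hval
    have hjm : j < wh.toList.length := by omega
    have hstep := prefixProd_succ φ wh hjm
    simp only [List.get_eq_getElem] at hstep
    rcases U.eq_nil_or_concat with rfl | ⟨V, q, hU⟩
    · rw [List.append_nil] at hch hval
      simp only [List.length_nil] at hbud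
      by_cases hp : (wg.toList.getD (k-1) (1,1)).2 * a ∈
          toSubgroup A B (wg.toList.getD (k-1) (1,1)).1 ∧
          (wh.toList[j]'hjm).1 = -(wg.toList.getD (k-1) (1,1)).1
      · -- ESCAPE : the W-form
        refine ⟨wg.toList.length - k, j, by omega, ?_⟩
        have hnk : wg.toList.length - (wg.toList.length - k) = k := by omega
        rw [hnk]
        have hi : k - 1 < wg.toList.length := by omega
        have hget : wg.toList.get ⟨k-1, hi⟩ = wg.toList.getD (k-1) (1,1) := by
          rw [List.getD_eq_getElem _ _ hi, List.get_eq_getElem]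
        refine ⟨hi, (wg.toList.getD (k-1) (1,1)).2 * a, by rw [hget]; exact hp.1, ?_⟩
        have h2 : of wg.head * lp φ (Pword wg.toList k a)
            = prefixProd φ wg k * (of (wg.toList.get ⟨k-1, hi⟩).2)⁻¹ *
              of ((wg.toList.getD (k-1) (1,1)).2 * a) := by
          rw [lp_pword φ h1 hk, prefixProd_eq, take_eq_pword h1 hk, lp_concat, hget, map_mul]
          group
        rw [h2] at hval
        calc wg.prod φ * r * wh.prod φ
            = (wg.prod φ * r * prefixProd φ wh j) * (prefixProd φ wh j)⁻¹ * wh.prod φ := by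
              group
          _ = _ := by rw [← hval]
      · -- no pinch : clean exit
        exfalso
        apply cleanExit k a [] j h1 hk hjm ?_ (by rw [List.append_nil]; exact hval)
        rw [List.nil_append]; simp only [List.Chain']; rw [List.isChain_append]
        refine ⟨hch, chain'_drop wh.chain j, ?_⟩
        intro x hx y hy
        rw [show Pword wg.toList k a = wg.toList.take (k-1) ++
            [((wg.toList.getD (k-1) (1,1)).1, (wg.toList.getD (k-1) (1,1)).2 * a)] from rfl,
          List.getLast?_concat] at hx
        rw [List.drop_eq_getElem_cons hjm] at hy
        simp only [List.head?_cons, Option.mem_some_iff] at hy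
        simp only [Option.mem_some_iff] at hx
        subst hx; subst hy
        intro hmm
        exact units_eq_of_ne_neg (fun hc => hp ⟨hmm, hc⟩)
    · rw [List.concat_eq_append] at hU; subst hU
      obtain ⟨ζ₀, z₀⟩ := q
      simp only [List.length_append, List.length_cons, List.length_nil] at hUc hbud
      by_cases hp : z₀ ∈ toSubgroup A B ζ₀ ∧ (wh.toList[j]'hjm).1 = -ζ₀
      · obtain ⟨σ', hσ'⟩ := pinchE' φ ζ₀ z₀ hp.1
        have hσ2 : ∀ d : HNNExtension G A B φ,
            t ^ ((ζ₀ : ℤˣ) : ℤ) * (of z₀ * (t ^ ((((-ζ₀) : ℤˣ)) : ℤ) * d)) = of σ' * d :=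
          fun d => by rw [← mul_assoc]; exact hσ' d
        have hval' : of wg.head * lp φ (Pword wg.toList k a ++ (V ++ [(ζ₀, z₀)]))
              * (t ^ ((wh.toList[j]'hjm).1 : ℤ) * of (wh.toList[j]'hjm).2)
            = wg.prod φ * r * prefixProd φ wh (j+1) := by
          rw [hstep, hval, mul_assoc]
        rcases V.eq_nil_or_concat with rfl | ⟨V₀, q₁, hV⟩
        · -- merge into the last letter of the g-prefix
          refine ih 0 (by omega) [] k (a * (σ' * (wh.toList[j]'hjm).2)) (j+1)
            (by simp) h1 hk (by omega) ?_ ?_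
          · simpa using chain'_pword hgchain h1 hk _
          · rw [← hval']
            simp only [List.nil_append, List.append_nil]
            rw [hp.2, lp_concat, lp_pword φ h1 hk, lp_pword φ h1 hk]
            simp only [map_mul, mul_assoc]
            rw [hσ2 (of (wh.toList[j]'hjm).2)]
        · -- merge into the last letter of U
          rw [List.concat_eq_append] at hV; subst hV
          obtain ⟨u₁, x₁⟩ := q₁
          simp only [List.length_append, List.length_cons, List.length_nil] at hUc hbud
          refine ih (c-1) (by omega) (V₀ ++ [(u₁, x₁ * (σ' * (wh.toList[j]'hjm).2))]) k a (j+1)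
            (by simp; omega) h1 hk (by simp; omega) ?_ ?_
          · have h2 : List.Chain' (RW A B)
                ((Pword wg.toList k a ++ V₀ ++ [(u₁, x₁)]) ++ [(ζ₀, z₀)]) := by
              simpa [List.append_assoc] using hch
            have h3 := (List.isChain_append.mp h2).1
            have h4 := chain'_modifyLast (y := x₁ * (σ' * (wh.toList[j]'hjm).2)) h3
            simpa [List.append_assoc] using h4
          · rw [← hval', hp.2]
            simp only [← List.append_assoc]
            rw [lp_concat, lp_concat, lp_concat]
            simp only [map_mul, mul_assoc]
            rw [hσ2]
      · -- no pinch : clean exit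
        exfalso
        apply cleanExit k a (V ++ [(ζ₀, z₀)]) j h1 hk hjm ?_ hval
        rw [show Pword wg.toList k a ++ ((V ++ [(ζ₀, z₀)]) ++ wh.toList.drop j)
            = (Pword wg.toList k a ++ (V ++ [(ζ₀, z₀)])) ++ wh.toList.drop j from by
          simp [List.append_assoc]]
        simp only [List.Chain']
        rw [List.isChain_append]
        refine ⟨hch, chain'_drop wh.chain j, ?_⟩
        intro x hx y hy
        rw [show Pword wg.toList k a ++ (V ++ [(ζ₀, z₀)])
            = (Pword wg.toList k a ++ V) ++ [(ζ₀, z₀)] from by simp [List.append_assoc],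
          List.getLast?_concat] at hx
        rw [List.drop_eq_getElem_cons hjm] at hy
        simp only [List.head?_cons, Option.mem_some_iff] at hy
        simp only [Option.mem_some_iff] at hx
        subst hx; subst hy
        intro hmm
        exact units_eq_of_ne_neg (fun hc => hp ⟨hmm, hc⟩)
  -- phase 1 : absorb r
  have hch0 : List.Chain' (RW A B) (Pword wg.toList wg.toList.length wr.head ++ []) := by
    simpa using chain'_pword hgchain hn1 (le_refl _) wr.head
  obtain ⟨k₀, a₀, U₀, H1, H2, H3, H4, H5, H6⟩ :=
    phase1 φ wg.toList hgchain wr.toList wg.toList.length wr.head [] hn1 (le_refl _)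
      (by simp; omega) hch0
  simp only [List.append_nil, List.length_nil] at H3 H6
  have hval0 : of wg.head * lp φ (Pword wg.toList k₀ a₀ ++ U₀) = wg.prod φ * r := by
    rw [H6, lp_pword φ hn1 (le_refl _), List.take_length, ← hwr, prod_eq_lp, prod_eq_lp]
    simp [mul_assoc]
  have hk₀n : k₀ ≤ wg.toList.length := le_trans H2 (le_refl _)
  -- merge the head of wh
  rcases U₀.eq_nil_or_concat with rfl | ⟨V, q, hU⟩
  · refine key 0 [] k₀ (a₀ * wh.head) 0 (by simp) H1 hk₀n ?_ ?_ ?_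
    · simp only [List.length_nil]
      omega
    · simpa using chain'_pword hgchain H1 hk₀n _
    · rw [prefixProd_zero, List.append_nil, lp_pword φ H1 hk₀n, map_mul]
      rw [List.append_nil, lp_pword φ H1 hk₀n] at hval0
      rw [← hval0]
      simp only [mul_assoc]
  · rw [List.concat_eq_append] at hU; subst hU
    obtain ⟨ζq, zq⟩ := q
    refine key (V.length + 1) (V ++ [(ζq, zq * wh.head)]) k₀ a₀ 0 (by simp) H1 hk₀n ?_ ?_ ?_
    · simp only [List.length_append, List.length_cons, List.length_nil] at H3 ⊢
      omega
    · have h2 : List.Chain' (RW A B) ((Pword wg.toList k₀ a₀ ++ V) ++ [(ζq, zq)]) := by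
        simpa [List.append_assoc] using H5
      have h4 := chain'_modifyLast (y := zq * wh.head) h2
      simpa [List.append_assoc] using h4
    · rw [prefixProd_zero]
      rw [show Pword wg.toList k₀ a₀ ++ (V ++ [(ζq, zq * wh.head)])
          = (Pword wg.toList k₀ a₀ ++ V) ++ [(ζq, zq * wh.head)] from by
        simp [List.append_assoc]]
      rw [lp_concat, map_mul]
      rw [show Pword wg.toList k₀ a₀ ++ (V ++ [(ζq, zq)])
          = (Pword wg.toList k₀ a₀ ++ V) ++ [(ζq, zq)] from by simp [List.append_assoc],
        lp_concat] at hval0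
      rw [← hval0]
      simp only [mul_assoc]
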